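/- Let τ: Symm_n → gl_n be a smooth map satisfying the equivariance τ(Q L Qᵀ) = Q τ(L) Qᵀ for all orthogonal Q in a fixed closed subgroup G ⊆ SO_n, and suppose exp(t τ(L₀)) ∈ B₋ · G for all t (where B₋ is the group of invertible lower-triangular matrices), with decomposition exp(t τ(L₀)) = R(t) Q(t), R(t) ∈ B₋, Q(t) ∈ G. Then L(t) = Q(t) L₀ Q(t)⁻¹ solves the Lax equation dL/dt = [M(τ(L)), L] with L(0) = L₀, where M is the projection of gl_n onto so_n along lower-triangular matrices. -/

import Mathlib

open Matrix Finset

/-- The projection of `gl_n` onto skew-symmetric matrices along lower-triangular matrices. -/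
def Mproj {n : ℕ} (X : Matrix (Fin n) (Fin n) ℝ) : Matrix (Fin n) (Fin n) ℝ :=
  Matrix.of fun i j => if i < j then X i j else if j < i then -X j i else 0

private lemma exp_entry_deriv {n : ℕ} (A : Matrix (Fin n) (Fin n) ℝ) (t : ℝ) (i j : Fin n) :
    HasDerivAt (fun s : ℝ => NormedSpace.exp (s • A) i j)
      ((NormedSpace.exp (t • A) * A) i j) t := by
  letI : SeminormedRing (Matrix (Fin n) (Fin n) ℝ) := Matrix.linftyOpSemiNormedRing
  letI : NormedRing (Matrix (Fin n) (Fin n) ℝ) := Matrix.linftyOpNormedRing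
  letI : NormedAlgebra ℝ (Matrix (Fin n) (Fin n) ℝ) := Matrix.linftyOpNormedAlgebra
  have h1 : HasDerivAt (fun s : ℝ => NormedSpace.exp (s • A))
      (NormedSpace.exp (t • A) * A) t := hasDerivAt_exp_smul_const A t
  let e : Matrix (Fin n) (Fin n) ℝ →ₗ[ℝ] ℝ :=
    { toFun := fun X => X i j, map_add' := fun _ _ => rfl, map_smul' := fun _ _ => rfl }
  exact (e.toContinuousLinearMap.hasFDerivAt.comp_hasDerivAt t h1 : _)

theorem stmt14 {n : ℕ}
    (G : Set (Matrix (Fin n) (Fin n) ℝ))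
    (hG : ∀ Q ∈ G, Q * Q.transpose = 1)
    (τ : Matrix (Fin n) (Fin n) ℝ → Matrix (Fin n) (Fin n) ℝ)
    (hτ : ∀ Q ∈ G, ∀ L : Matrix (Fin n) (Fin n) ℝ, L.transpose = L →
      τ (Q * L * Q.transpose) = Q * τ L * Q.transpose)
    (L₀ : Matrix (Fin n) (Fin n) ℝ) (hL₀ : L₀.transpose = L₀)
    (R Q : ℝ → Matrix (Fin n) (Fin n) ℝ)
    (hdec : ∀ t : ℝ, NormedSpace.exp (t • τ L₀) = R t * Q t)
    (hR : ∀ t, ∀ i j : Fin n, i < j → R t i j = 0)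
    (hRunit : ∀ t, IsUnit (R t).det)
    (hQG : ∀ t, Q t ∈ G)
    (hQ0 : Q 0 = 1)
    (R' Q' : ℝ → Matrix (Fin n) (Fin n) ℝ)
    (hdR : ∀ t (i j : Fin n), HasDerivAt (fun s => R s i j) (R' t i j) t)
    (hdQ : ∀ t (i j : Fin n), HasDerivAt (fun s => Q s i j) (Q' t i j) t) :
    Q 0 * L₀ * (Q 0)⁻¹ = L₀ ∧
    ∀ t (i j : Fin n), HasDerivAt (fun s => (Q s * L₀ * (Q s)⁻¹) i j)
      ((Mproj (τ (Q t * L₀ * (Q t)⁻¹)) * (Q t * L₀ * (Q t)⁻¹)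
        - (Q t * L₀ * (Q t)⁻¹) * Mproj (τ (Q t * L₀ * (Q t)⁻¹))) i j) t := by
  have hQinv : ∀ t, (Q t)⁻¹ = (Q t).transpose := fun t =>
    Matrix.inv_eq_right_inv (hG _ (hQG t))
  have hQtQ : ∀ t, (Q t).transpose * Q t = 1 := fun t =>
    mul_eq_one_comm.mp (hG _ (hQG t))
  refine ⟨by rw [hQ0]; simp, ?_⟩
  intro t i j
  set A := τ L₀ with hA
  -- Step 1: R' Q + R Q' = (R Q) A  from differentiating the decomposition.
  have heq : R' t * Q t + R t * Q' t = R t * Q t * A := by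
    ext a b
    have hprod : HasDerivAt (fun s => (R s * Q s) a b)
        ((R' t * Q t + R t * Q' t) a b) t := by
      have h1 : HasDerivAt (fun s => ∑ k, R s a k * Q s k b)
          (∑ k, (R' t a k * Q t k b + R t a k * Q' t k b)) t :=
        HasDerivAt.fun_sum fun k _ => (hdR t a k).mul (hdQ t k b)
      have h2 : (fun s => (R s * Q s) a b) = fun s => ∑ k, R s a k * Q s k b := by
        funext s; simp [Matrix.mul_apply]
      rw [h2]
      convert h1 using 1
      simp [Matrix.add_apply, Matrix.mul_apply, Finset.sum_add_distrib]
    have hexp : HasDerivAt (fun s => (R s * Q s) a b) ((R t * Q t * A) a b) t := by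
      have h3 := exp_entry_deriv A t a b
      have h4 : (fun s : ℝ => NormedSpace.exp (s • A) a b)
          = fun s => (R s * Q s) a b := by funext s; rw [hdec s]
      rw [h4, hdec t] at h3
      exact h3
    exact hprod.unique hexp
  -- Step 2: skew-symmetry of S = Q' Qᵀ.
  have hskew : Q' t * (Q t).transpose + Q t * (Q' t).transpose = 0 := by
    ext a b
    have h1 : HasDerivAt (fun s => ∑ k, Q s a k * Q s b k)
        (∑ k, (Q' t a k * Q t b k + Q t a k * Q' t b k)) t :=
      HasDerivAt.fun_sum fun k _ => (hdQ t a k).mul (hdQ t b k)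
    have h2 : (fun s => ∑ k, Q s a k * Q s b k) = fun _ => (1 : Matrix (Fin n) (Fin n) ℝ) a b := by
      funext s
      have := hG _ (hQG s)
      calc ∑ k, Q s a k * Q s b k = (Q s * (Q s).transpose) a b := by
            simp [Matrix.mul_apply, Matrix.transpose_apply]
        _ = (1 : Matrix (Fin n) (Fin n) ℝ) a b := by rw [this]
    have h3 : HasDerivAt (fun s => ∑ k, Q s a k * Q s b k) 0 t := by
      rw [h2]; exact hasDerivAt_const _ _
    have h4 := h1.unique h3
    simpa [Matrix.add_apply, Matrix.mul_apply, Matrix.transpose_apply,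
      Finset.sum_add_distrib] using h4
  set S := Q' t * (Q t).transpose with hS
  have hSskew : S.transpose = -S := by
    have h1 : S + S.transpose = 0 := by
      rw [hS, Matrix.transpose_mul, Matrix.transpose_transpose]; exact hskew
    exact eq_neg_of_add_eq_zero_right h1
  have hQ't : Q' t = S * Q t := by rw [hS, Matrix.mul_assoc, hQtQ, Matrix.mul_one]
  -- Step 3: τ(L) = T + S with T = R⁻¹ R' lower triangular.
  have hRinv : (R t)⁻¹ * R t = 1 := Matrix.nonsing_inv_mul _ (hRunit t)
  set T := (R t)⁻¹ * R' t with hT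
  have hTS : T + S = τ (Q t * L₀ * (Q t).transpose) := by
    have h2 : τ (Q t * L₀ * (Q t).transpose) = Q t * A * (Q t).transpose :=
      hτ _ (hQG t) L₀ hL₀
    have h3 : (R t)⁻¹ * (R' t * Q t + R t * Q' t) * (Q t).transpose
        = (R t)⁻¹ * (R t * Q t * A) * (Q t).transpose := by rw [heq]
    calc T + S
        = (R t)⁻¹ * (R' t * Q t + R t * Q' t) * (Q t).transpose := by
          rw [Matrix.mul_add, Matrix.add_mul]
          congr 1
          · rw [hT]; rw [← Matrix.mul_assoc,
              Matrix.mul_assoc ((R t)⁻¹ * R' t), hG _ (hQG t), Matrix.mul_one]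
          · rw [hS, ← Matrix.mul_assoc, hRinv, Matrix.one_mul]
      _ = (R t)⁻¹ * (R t * Q t * A) * (Q t).transpose := h3
      _ = Q t * A * (Q t).transpose := by
          rw [show R t * Q t * A = R t * (Q t * A) from Matrix.mul_assoc _ _ _,
            ← Matrix.mul_assoc ((R t)⁻¹), hRinv, Matrix.one_mul]
      _ = τ (Q t * L₀ * (Q t).transpose) := h2.symm
  -- T is lower triangular.
  have hTlow : ∀ a b : Fin n, a < b → T a b = 0 := by
    intro a b hab
    haveI := (R t).invertibleOfIsUnitDet (hRunit t)
    have hRtri : BlockTriangular (R t) (OrderDual.toDual : Fin n → (Fin n)ᵒᵈ) := by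
      intro x y hxy
      exact hR t x y hxy
    have hR'tri : BlockTriangular (R' t) (OrderDual.toDual : Fin n → (Fin n)ᵒᵈ) := by
      intro x y hxy
      have hconst : HasDerivAt (fun s => R s x y) 0 t := by
        have : (fun s => R s x y) = fun _ => (0 : ℝ) := funext fun s => hR s x y hxy
        rw [this]; exact hasDerivAt_const _ _
      exact (hdR t x y).unique hconst
    have hinvtri := blockTriangular_inv_of_blockTriangular hRtri
    exact (hinvtri.mul hR'tri) hab
  -- Step 4: Mproj (τ L) = S.
  have hSentry : ∀ a b : Fin n, S b a = -S a b := by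
    intro a b
    have := congrFun (congrFun hSskew a) b
    simpa [Matrix.transpose_apply, Matrix.neg_apply] using this
  have hM : Mproj (τ (Q t * L₀ * (Q t).transpose)) = S := by
    rw [← hTS]
    ext a b
    rcases lt_trichotomy a b with h | h | h
    · simp [Mproj, h, Matrix.add_apply, hTlow a b h]
    · subst h
      have : S a a = -S a a := hSentry a a
      simp [Mproj, lt_irrefl]
      linarith
    · simp [Mproj, h, not_lt_of_gt h, Matrix.add_apply, hTlow b a h, hSentry a b]
  -- Step 5: final derivative computation.
  have hfinal : Q' t * L₀ * (Q t).transpose + Q t * L₀ * (Q' t).transpose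
      = S * (Q t * L₀ * (Q t).transpose) - (Q t * L₀ * (Q t).transpose) * S := by
    rw [hQ't, Matrix.transpose_mul, hSskew]
    simp only [Matrix.mul_neg, Matrix.mul_assoc, sub_eq_add_neg]
  have hfun2 : (fun s => (Q s * L₀ * (Q s)⁻¹) i j)
      = fun s => ∑ l, (∑ k, Q s i k * L₀ k l) * Q s j l := by
    funext s
    rw [hQinv s]
    simp [Matrix.mul_apply, Matrix.transpose_apply]
  have hd3 : HasDerivAt (fun s => ∑ l, (∑ k, Q s i k * L₀ k l) * Q s j l)
      (∑ l, ((∑ k, Q' t i k * L₀ k l) * Q t j l + (∑ k, Q t i k * L₀ k l) * Q' t j l)) t :=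
    HasDerivAt.fun_sum fun l _ =>
      (HasDerivAt.fun_sum fun k _ => (hdQ t i k).mul_const (L₀ k l)).mul (hdQ t j l)
  have hval : ((Mproj (τ (Q t * L₀ * (Q t)⁻¹)) * (Q t * L₀ * (Q t)⁻¹)
        - (Q t * L₀ * (Q t)⁻¹) * Mproj (τ (Q t * L₀ * (Q t)⁻¹))) i j)
      = ∑ l, ((∑ k, Q' t i k * L₀ k l) * Q t j l + (∑ k, Q t i k * L₀ k l) * Q' t j l) := by
    rw [hQinv t, hM, ← hfinal]
    simp [Matrix.add_apply, Matrix.mul_apply, Matrix.transpose_apply, Finset.sum_add_distrib]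
  rw [hfun2]
  rw [hval] at *
  exact hd3
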